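/- For any integers k, m, N with 1 ≤ k ≤ m ≤ N/2, and the constant c = log₂(e) + 1, we have log₂ C(N−k, m−k) ≤ (1 − k/(c·m)) · log₂ C(N, m), where C(·,·) denotes the binomial coefficient. -/

import Mathlib

open Real Nat

lemma aux1 (N m k : ℕ) (hk : k ≤ m) (hm : m ≤ N) :
    N ^ k * (N - k).choose (m - k) ≤ m ^ k * N.choose m := by
  induction k with
  | zero => simp
  | succ k ih =>
    have hk' : k ≤ m := Nat.le_of_succ_le hk
    have ih' := ih hk'
    have key : (N - k) * ((N - k - 1).choose (m - k - 1)) = (N - k).choose (m - k) * (m - k) := by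
      have h := Nat.add_one_mul_choose_eq (N - k - 1) (m - k - 1)
      have e1 : N - k - 1 + 1 = N - k := by omega
      have e2 : m - k - 1 + 1 = m - k := by omega
      rw [e1, e2] at h
      exact h
    have hNk : N * (m - k) ≤ m * (N - k) := by
      rcases Nat.exists_eq_add_of_le hk' with ⟨a, ha⟩
      rcases Nat.exists_eq_add_of_le (hk'.trans hm) with ⟨b, hb⟩
      have hab : a ≤ b := by omega
      subst ha hb
      simp only [Nat.add_sub_cancel_left]
      nlinarith
    refine Nat.le_of_mul_le_mul_left ?_ (show 0 < N - k by omega)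
    calc (N - k) * (N ^ (k+1) * (N - (k+1)).choose (m - (k+1)))
        = N ^ k * N * ((N - k) * ((N - k - 1).choose (m - k - 1))) := by
          rw [show N - (k+1) = N - k - 1 by omega, show m - (k+1) = m - k - 1 by omega]; ring
      _ = N ^ k * ((N * (m - k)) * (N - k).choose (m - k)) := by rw [key]; ring
      _ ≤ N ^ k * ((m * (N - k)) * (N - k).choose (m - k)) := by gcongr
      _ = (m * (N - k)) * (N ^ k * (N - k).choose (m - k)) := by ring
      _ ≤ (m * (N - k)) * (m ^ k * N.choose m) := Nat.mul_le_mul_left _ ih'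
      _ = (N - k) * (m ^ (k+1) * N.choose m) := by ring

lemma aux2 (N m : ℕ) (hm : 1 ≤ m) :
    (N.choose m : ℝ) * m ^ m ≤ (Real.exp 1 * N) ^ m := by
  have hfac : (0:ℝ) < (m ! : ℝ) := by exact_mod_cast m.factorial_pos
  have h1 : (N.choose m : ℝ) ≤ (N:ℝ) ^ m / m ! := Nat.choose_le_pow_div m N
  have h2 : (m:ℝ) ^ m ≤ Real.exp 1 ^ m * m ! := by
    have hs := Real.sum_le_exp_of_nonneg (x := (m:ℝ)) (by positivity) (m+1)
    have hsingle : (m:ℝ) ^ m / m ! ≤ ∑ i ∈ Finset.range (m+1), (m:ℝ) ^ i / i ! :=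
      Finset.single_le_sum (f := fun i => (m:ℝ) ^ i / i !)
        (fun i _ => by positivity) (Finset.mem_range.mpr (Nat.lt_succ_self m))
    have hexp : Real.exp (m:ℝ) = Real.exp 1 ^ m := (Real.exp_one_pow m).symm
    have h3 := hsingle.trans hs
    rw [hexp, div_le_iff₀ hfac] at h3
    exact h3
  calc (N.choose m : ℝ) * m ^ m ≤ ((N:ℝ) ^ m / m !) * (Real.exp 1 ^ m * m !) := by
        apply mul_le_mul h1 h2 (by positivity) (by positivity)
    _ = (Real.exp 1 ^ m * (N:ℝ) ^ m) * ((m ! : ℝ) / m !) := by ring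
    _ = (Real.exp 1 * N) ^ m := by rw [div_self hfac.ne', mul_one, mul_pow]

theorem stmt_0 (N m k : ℕ) (h1 : 1 ≤ k) (h2 : k ≤ m) (h3 : 2 * m ≤ N) :
    Real.logb 2 ((N - k).choose (m - k)) ≤
      (1 - (k : ℝ) / ((Real.logb 2 (Real.exp 1) + 1) * m)) * Real.logb 2 (N.choose m) := by
  have hm0 : (0:ℝ) < m := by exact_mod_cast (h1.trans h2)
  have hmN : m ≤ N := by omega
  set a : ℝ := ((N - k).choose (m - k) : ℝ) with ha_def
  set b : ℝ := (N.choose m : ℝ) with hb_def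
  have ha1 : (1:ℝ) ≤ a := by
    have h : 0 < (N - k).choose (m - k) := Nat.choose_pos (by omega)
    rw [ha_def]; exact_mod_cast h
  have hb1 : (1:ℝ) ≤ b := by
    have h : 0 < N.choose m := Nat.choose_pos hmN
    rw [hb_def]; exact_mod_cast h
  set r : ℝ := (N:ℝ) / m with hr_def
  have hr2 : (2:ℝ) ≤ r := by
    rw [hr_def, le_div_iff₀ hm0]
    exact_mod_cast h3
  have hr0 : (0:ℝ) < r := by linarith
  -- fact 1 : a * r^k ≤ b
  have hF1 : a * r ^ k ≤ b := by
    have h : (N:ℝ) ^ k * a ≤ (m:ℝ) ^ k * b := by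
      rw [ha_def, hb_def]
      exact_mod_cast aux1 N m k h2 hmN
    rw [hr_def, div_pow, ← mul_div_assoc, div_le_iff₀ (by positivity)]
    nlinarith [pow_pos hm0 k]
  -- fact 2 : b ≤ (e * r)^m
  have hF2 : b ≤ (Real.exp 1 * r) ^ m := by
    have h : b * (m:ℝ) ^ m ≤ (Real.exp 1 * N) ^ m := by
      rw [hb_def]; exact aux2 N m (h1.trans h2)
    have hmpow : (0:ℝ) < (m:ℝ) ^ m := by positivity
    rw [hr_def, ← mul_div_assoc, div_pow, le_div_iff₀ hmpow]
    exact h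
  set L : ℝ := Real.logb 2 (Real.exp 1) with hL_def
  have hL : 0 < L := Real.logb_pos (by norm_num) (by
    have := Real.exp_one_gt_d9; linarith)
  set t : ℝ := Real.logb 2 r with ht_def
  have ht1 : (1:ℝ) ≤ t := by
    rw [ht_def, show (1:ℝ) = Real.logb 2 2 from (Real.logb_self_eq_one (by norm_num)).symm]
    exact Real.logb_le_logb_of_le (by norm_num) (by norm_num) hr2
  set A : ℝ := Real.logb 2 a with hA_def
  set B : ℝ := Real.logb 2 b with hB_def
  have hB0 : 0 ≤ B := Real.logb_nonneg (by norm_num) hb1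
  have hAB : A + k * t ≤ B := by
    have h := Real.logb_le_logb_of_le (b := 2) (by norm_num) (by positivity) hF1
    rwa [Real.logb_mul (by linarith) (by positivity), Real.logb_pow] at h
  have hBle : B ≤ m * (L + t) := by
    have h := Real.logb_le_logb_of_le (b := 2) (by norm_num) (by linarith) hF2
    rwa [Real.logb_pow, Real.logb_mul (Real.exp_pos 1).ne' hr0.ne'] at h
  have hc : (0:ℝ) < (L + 1) * m := by positivity
  have hk1 : (1:ℝ) ≤ (k:ℝ) := by exact_mod_cast h1
  have key : (k:ℝ) / ((L + 1) * m) * B ≤ k * t := by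
    rw [div_mul_eq_mul_div, div_le_iff₀ hc]
    have h1' : (k:ℝ) * B ≤ k * (m * (L + t)) :=
      mul_le_mul_of_nonneg_left hBle (by positivity)
    have h2' : (m:ℝ) * (L + t) ≤ t * ((L + 1) * m) := by
      nlinarith [mul_nonneg (mul_nonneg hm0.le hL.le) (sub_nonneg.mpr ht1)]
    calc (k:ℝ) * B ≤ k * (m * (L + t)) := h1'
      _ ≤ k * (t * ((L + 1) * m)) := mul_le_mul_of_nonneg_left h2' (by positivity)
      _ = k * t * ((L + 1) * m) := by ring
  have expand : (1 - (k:ℝ) / ((L + 1) * m)) * B = B - (k:ℝ) / ((L + 1) * m) * B := by ring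
  rw [expand]
  linarith
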